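/- Let a, b, c > 0 and set s_* := (b + √(b² + 24ac))/(4c). The set of global minimizers over S₀ of the Landau-de Gennes bulk potential Q ↦ −(a/2) tr Q² − (b/3) tr Q³ + (c/4)(tr Q²)² is exactly { s_* ( n⊗n − (1/3)Id ) : n ∈ ℝ³, |n| = 1 }. Moreover, every such minimizer Q satisfies |Q| = s_* √(2/3) and 6 (tr Q³)² = (tr Q²)³ (that is, β(Q) = 0). -/

import Mathlib

open Matrix

noncomputable section

abbrev M3 : Type := Matrix (Fin 3) (Fin 3) ℝ

/-- The space S₀ of symmetric traceless 3×3 real matrices. -/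
def S0 : Set M3 := {Q | Qᵀ = Q ∧ Q.trace = 0}

/-- The Frobenius norm. -/
def frob (Q : M3) : ℝ := Real.sqrt (∑ i, ∑ j, (Q i j) ^ 2)

/-- s_* = (b + √(b² + 24ac))/(4c). -/
def sstar (a b c : ℝ) : ℝ := (b + Real.sqrt (b ^ 2 + 24 * a * c)) / (4 * c)

/-- The Landau-de Gennes bulk potential −(a/2)tr Q² − (b/3)tr Q³ + (c/4)(tr Q²)². -/
def fLG (a b c : ℝ) (Q : M3) : ℝ :=
  -(a/2) * (Q * Q).trace - (b/3) * (Q * Q * Q).trace + (c/4) * ((Q * Q).trace) ^ 2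

/-! ### Auxiliary lemmas -/

lemma herm_of_symm {Q : M3} (h : Qᵀ = Q) : Q.IsHermitian := by
  rw [Matrix.IsHermitian, conjTranspose_eq_transpose_of_trivial, h]

lemma sumsq_eq_trace (Q : M3) : (∑ i, ∑ j, (Q i j)^2) = (Qᵀ * Q).trace := by
  simp [Matrix.trace, Matrix.mul_apply, Matrix.diag, Fin.sum_univ_three, sq]
  ring

lemma eq_zero_of_trace_sq (Q : M3) (h : (Qᵀ * Q).trace = 0) : Q = 0 := by
  have h' : (∑ i, ∑ j, (Q i j)^2) = 0 := by rw [sumsq_eq_trace, h]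
  ext i j
  have h1 := (Finset.sum_eq_zero_iff_of_nonneg
    (fun i _ => Finset.sum_nonneg fun j _ => sq_nonneg (Q i j))).mp h' i (Finset.mem_univ i)
  have h2 := (Finset.sum_eq_zero_iff_of_nonneg
    (fun j _ => sq_nonneg (Q i j))).mp h1 j (Finset.mem_univ j)
  simpa using pow_eq_zero_iff (n := 2) (by norm_num) |>.mp h2

/-- Cayley–Hamilton for 3×3 matrices, brute force. -/
lemma ch3 (Q : M3) :
    Q * Q * Q = Q.trace • (Q * Q) + (((Q*Q).trace - Q.trace^2)/2) • Q + Q.det • (1 : M3) := by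
  have hdet := Matrix.det_fin_three Q
  ext i j
  simp [Matrix.mul_apply, Matrix.trace, Matrix.diag, Fin.sum_univ_three, hdet,
    Matrix.one_apply, Matrix.smul_apply]
  fin_cases i <;> fin_cases j <;> simp <;> ring

lemma trace_powers {Q : M3} (hQ : Q.IsHermitian) :
    Q.trace = ∑ i, hQ.eigenvalues i ∧
    (Q * Q).trace = ∑ i, hQ.eigenvalues i ^ 2 ∧
    (Q * Q * Q).trace = ∑ i, hQ.eigenvalues i ^ 3 := by
  set U : M3 := (hQ.eigenvectorUnitary : M3) with hU
  set D : M3 := diagonal (RCLike.ofReal ∘ hQ.eigenvalues) with hD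
  have hspec : Q = U * D * star U := hQ.spectral_theorem
  have hsU : star U * U = 1 := Matrix.mem_unitaryGroup_iff'.mp hQ.eigenvectorUnitary.2
  have key : ∀ M : M3, (U * M * star U).trace = M.trace := by
    intro M
    rw [Matrix.trace_mul_cycle, hsU, Matrix.one_mul]
  have h2 : Q * Q = U * (D * D) * star U := by
    conv_lhs => rw [hspec]
    have e : U * D * star U * (U * D * star U) = U * D * (star U * U) * (D * star U) := by
      noncomm_ring
    rw [e, hsU, Matrix.mul_one]; noncomm_ring
  have h3 : Q * Q * Q = U * (D * D * D) * star U := by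
    rw [h2]; conv_lhs => rw [hspec]
    have e : U * (D * D) * star U * (U * D * star U)
        = U * (D * D) * (star U * U) * (D * star U) := by noncomm_ring
    rw [e, hsU, Matrix.mul_one]; noncomm_ring
  refine ⟨?_, ?_, ?_⟩
  · conv_lhs => rw [hspec]
    rw [key, hD]; simp [Matrix.trace_diagonal]
  · rw [h2, key, hD, diagonal_mul_diagonal]; simp [Matrix.trace_diagonal, sq]
  · rw [h3, key, hD, diagonal_mul_diagonal, diagonal_mul_diagonal]
    simp [Matrix.trace_diagonal, pow_succ, pow_zero, mul_assoc]

lemma cubic_ineq (x y z : ℝ) (h : x + y + z = 0) :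
    6*(x^3+y^3+z^3)^2 ≤ (x^2+y^2+z^2)^3 := by
  have hz : z = -x-y := by linarith
  subst hz
  nlinarith [sq_nonneg ((x-y)*(2*(x+y)^2+x*y)), sq_nonneg (x-y), sq_nonneg (2*(x+y)^2+x*y)]

def gfun (a b c s : ℝ) : ℝ := -(a/3)*s^2 - (2*b/27)*s^3 + (c/9)*s^4

lemma g_ineq (a b c s t : ℝ) (hroot : 2*c*t^2 - b*t - 3*a = 0) :
    9*(gfun a b c s - gfun a b c t) =
      (s-t)^2*(c*s^2 + (2*c*t-2*b/3)*s + (c*t^2 - b*t/3)) := by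
  unfold gfun; linear_combination (s^2 - t^2) * hroot

lemma sstar_root (a b c : ℝ) (ha : 0 < a) (hb : 0 < b) (hc : 0 < c) :
    2*c*(sstar a b c)^2 - b*(sstar a b c) - 3*a = 0 := by
  have hR : Real.sqrt (b^2+24*a*c) ^ 2 = b^2+24*a*c := Real.sq_sqrt (by positivity)
  unfold sstar
  set R := Real.sqrt (b^2+24*a*c) with hRdef
  have hc' : (c:ℝ) ≠ 0 := ne_of_gt hc
  field_simp
  linear_combination 2 * hR

lemma proj_rank_one (P : M3) (hsym : Pᵀ = P) (hidem : P * P = P) (htr : P.trace = 1) :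
    ∃ n : Fin 3 → ℝ, (∑ i, n i ^ 2) = 1 ∧ P = vecMulVec n n := by
  have hsym' : ∀ j k, P k j = P j k := fun j k => by
    have := congrFun (congrFun hsym j) k
    simpa [Matrix.transpose_apply] using this
  have hent : ∀ j k, ∑ l, P j l * P l k = P j k := fun j k => by
    have := congrFun (congrFun hidem j) k
    simpa [Matrix.mul_apply] using this
  have hdiag : ∀ j, P j j = ∑ l, (P j l)^2 := fun j => by
    rw [← hent j j]
    exact Finset.sum_congr rfl fun l _ => by rw [sq, hsym' j l]
  have hex : ∃ i, P i i ≠ 0 := by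
    by_contra hno
    push_neg at hno
    have : P.trace = 0 := by simp [Matrix.trace, Matrix.diag, Fin.sum_univ_three, hno]
    rw [htr] at this; norm_num at this
  obtain ⟨i, hi⟩ := hex
  have hdi : 0 < P i i := lt_of_le_of_ne (by rw [hdiag]; positivity) (Ne.symm hi)
  set d := P i i with hd
  set cv : Fin 3 → ℝ := fun l => P l i with hcv
  have hPc : ∀ j, ∑ l, P j l * cv l = cv j := fun j => hent j i
  have hPc' : ∀ k, ∑ l, cv l * P l k = cv k := fun k => by
    simp only [hcv]
    calc ∑ l, P l i * P l k = ∑ l, P i l * P l k :=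
          Finset.sum_congr rfl fun l _ => by rw [hsym' i l]
      _ = P i k := hent i k
      _ = P k i := (hsym' i k).symm
  have hcol : ∑ l, (cv l)^2 = d := by
    rw [hd, ← hent i i]
    exact (Finset.sum_congr rfl fun l _ => by rw [sq, hcv]; rw [hsym' l i]).symm
  set V : M3 := vecMulVec cv cv with hV
  have h1 : P * V = V := by
    ext j k
    simp only [hV, Matrix.mul_apply, Matrix.vecMulVec_apply]
    have : ∑ l, P j l * (cv l * cv k) = (∑ l, P j l * cv l) * cv k := by
      rw [Finset.sum_mul]; exact Finset.sum_congr rfl fun l _ => by ring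
    rw [this, hPc]
  have h2 : V * P = V := by
    ext j k
    simp only [hV, Matrix.mul_apply, Matrix.vecMulVec_apply]
    have : ∑ l, cv j * cv l * P l k = cv j * ∑ l, cv l * P l k := by
      rw [Finset.mul_sum]; exact Finset.sum_congr rfl fun l _ => by ring
    rw [this, hPc']
  have h3 : V * V = d • V := by
    ext j k
    simp only [hV, Matrix.mul_apply, Matrix.vecMulVec_apply, Matrix.smul_apply, smul_eq_mul]
    have : ∑ l, cv j * cv l * (cv l * cv k) = (∑ l, (cv l)^2) * (cv j * cv k) := by
      rw [Finset.sum_mul]; exact Finset.sum_congr rfl fun l _ => by ring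
    rw [this, hcol]
  set M : M3 := d • P - V with hM
  have hMsym : Mᵀ = M := by
    rw [hM, Matrix.transpose_sub, Matrix.transpose_smul, hsym, hV]
    ext j k
    simp [Matrix.transpose_apply, Matrix.vecMulVec_apply, mul_comm]
  have hMM : M * M = d • M := by
    simp only [hM, sub_mul, mul_sub, Matrix.smul_mul, Matrix.mul_smul, hidem, h1, h2, h3,
      smul_sub, smul_smul]
    abel
  have htrV : V.trace = d := by
    have : V.trace = ∑ l, (cv l)^2 := by
      simp [hV, Matrix.trace, Matrix.diag, Matrix.vecMulVec_apply, sq]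
    rw [this, hcol]
  have htrM : M.trace = 0 := by
    rw [hM, Matrix.trace_sub, Matrix.trace_smul, htr, htrV]; simp
  have hM0 : M = 0 := by
    apply eq_zero_of_trace_sq
    rw [hMsym, hMM, Matrix.trace_smul, htrM]; simp
  have hdP : ∀ j k, d * P j k = cv j * cv k := fun j k => by
    have := congrFun (congrFun hM0 j) k
    simp only [hM, Matrix.sub_apply, Matrix.smul_apply, hV, Matrix.vecMulVec_apply,
      Matrix.zero_apply, smul_eq_mul] at this
    linarith
  set r := Real.sqrt d with hr
  have hr2 : r^2 = d := Real.sq_sqrt hdi.le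
  have hrpos : 0 < r := Real.sqrt_pos.mpr hdi
  refine ⟨fun l => cv l / r, ?_, ?_⟩
  · have : ∑ l, (cv l / r)^2 = (∑ l, (cv l)^2) / r^2 := by
      rw [Finset.sum_div]; exact Finset.sum_congr rfl fun l _ => by ring
    rw [this, hcol, hr2]
    field_simp
  · ext j k
    simp only [Matrix.vecMulVec_apply]
    have := hdP j k
    have hrne : r ≠ 0 := ne_of_gt hrpos
    field_simp
    linear_combination this + P j k * hr2

lemma uniax_traces (s : ℝ) (n : Fin 3 → ℝ) (h : (∑ i, n i ^ 2) = 1) :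
    (s • (vecMulVec n n - (1/3 : ℝ) • (1 : M3)))ᵀ = s • (vecMulVec n n - (1/3 : ℝ) • (1 : M3)) ∧
    (s • (vecMulVec n n - (1/3 : ℝ) • (1 : M3))).trace = 0 ∧
    ((s • (vecMulVec n n - (1/3 : ℝ) • (1 : M3))) *
      (s • (vecMulVec n n - (1/3 : ℝ) • (1 : M3)))).trace = 2*s^2/3 ∧
    ((s • (vecMulVec n n - (1/3 : ℝ) • (1 : M3))) *
      (s • (vecMulVec n n - (1/3 : ℝ) • (1 : M3))) *
      (s • (vecMulVec n n - (1/3 : ℝ) • (1 : M3)))).trace = 2*s^3/9 := by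
  have h3 : n 0 ^ 2 + n 1 ^ 2 + n 2 ^ 2 = 1 := by simpa [Fin.sum_univ_three] using h
  refine ⟨?_, ?_, ?_, ?_⟩
  · ext j k
    simp [Matrix.transpose_apply, Matrix.vecMulVec_apply, Matrix.one_apply, Matrix.smul_apply,
      Matrix.sub_apply]
    by_cases hjk : j = k
    · simp [hjk, mul_comm]
    · simp [hjk, mul_comm]
      exact Or.inl fun hkj => hjk hkj.symm
  · simp [Matrix.trace, Matrix.diag, Fin.sum_univ_three, Matrix.smul_apply, Matrix.sub_apply,
      Matrix.vecMulVec_apply, Matrix.one_apply]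
    linear_combination s * h3
  · simp [Matrix.trace, Matrix.diag, Fin.sum_univ_three, Matrix.mul_apply, Matrix.smul_apply,
      Matrix.sub_apply, Matrix.vecMulVec_apply, Matrix.one_apply]
    linear_combination (s^2*((n 0 ^2 + n 1^2 + n 2^2) + 1/3)) * h3
  · simp [Matrix.trace, Matrix.diag, Fin.sum_univ_three, Matrix.mul_apply, Matrix.smul_apply,
      Matrix.sub_apply, Matrix.vecMulVec_apply, Matrix.one_apply]
    linear_combination (s^3*((n 0 ^2 + n 1^2 + n 2^2)^2 + 1/3)) * h3

set_option maxHeartbeats 2000000 in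
/-- The set of global minimizers over S₀ of the Landau-de Gennes bulk potential is
exactly { s_* ( n⊗n − (1/3)Id ) : |n| = 1 }; every minimizer Q has |Q| = s_* √(2/3)
and 6 (tr Q³)² = (tr Q²)³ (that is, β(Q) = 0). -/
theorem stmt4 (a b c : ℝ) (ha : 0 < a) (hb : 0 < b) (hc : 0 < c) :
    ({Q ∈ S0 | ∀ P ∈ S0, fLG a b c Q ≤ fLG a b c P} =
      {Q : M3 | ∃ n : Fin 3 → ℝ, (∑ i, n i ^ 2) = 1 ∧
        Q = sstar a b c • (vecMulVec n n - (1/3 : ℝ) • (1 : M3))}) ∧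
    ∀ Q ∈ {Q ∈ S0 | ∀ P ∈ S0, fLG a b c Q ≤ fLG a b c P},
      frob Q = sstar a b c * Real.sqrt (2/3) ∧
      6 * ((Q * Q * Q).trace) ^ 2 = ((Q * Q).trace) ^ 3 := by
  set m := sstar a b c with hm
  have hroot : 2*c*m^2 - b*m - 3*a = 0 := sstar_root a b c ha hb hc
  have hmpos : 0 < m := by
    rw [hm]; unfold sstar
    have h1 : 0 ≤ Real.sqrt (b ^ 2 + 24 * a * c) := Real.sqrt_nonneg _
    have h2 : 0 < b + Real.sqrt (b ^ 2 + 24 * a * c) := by linarith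
    exact div_pos h2 (by linarith)
  clear_value m
  have hbm : b < 2*c*m := by
    have h1 : m * (2*c*m - b) = 3*a := by linear_combination hroot
    nlinarith [h1, hmpos, ha]
  -- the lower bound: fLG ≥ gfun at sstar, on S0
  have hmin : ∀ Q : M3, Qᵀ = Q → Q.trace = 0 → gfun a b c m ≤ fLG a b c Q := by
    intro Q hQsym hQtr
    have hH := herm_of_symm hQsym
    obtain ⟨ht1, ht2, ht3⟩ := trace_powers hH
    set lam := hH.eigenvalues with hlam
    clear_value lam
    have hsum0 : lam 0 + lam 1 + lam 2 = 0 := by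
      have := ht1.symm.trans hQtr
      simpa [Fin.sum_univ_three] using this
    set p2 := (Q*Q).trace with hp2
    set p3 := (Q*Q*Q).trace with hp3
    clear_value p2 p3
    have hp2e : p2 = lam 0 ^2 + lam 1 ^2 + lam 2 ^2 := by
      rw [ht2, Fin.sum_univ_three]
    have hp3e : p3 = lam 0 ^3 + lam 1 ^3 + lam 2 ^3 := by
      rw [ht3, Fin.sum_univ_three]
    have hp2nn : 0 ≤ p2 := by rw [hp2e]; positivity
    have h6 : 6*p3^2 ≤ p2^3 := by
      rw [hp2e, hp3e]; exact cubic_ineq _ _ _ hsum0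
    -- substitute s' = sqrt(3 p2 / 2)
    set s' := Real.sqrt (3*p2/2) with hs'
    have hs'nn : 0 ≤ s' := Real.sqrt_nonneg _
    have hs'sq0 : s'^2 = 3*p2/2 := Real.sq_sqrt (by linarith)
    clear_value s'
    have hs'sq : s'^2 = 3*p2/2 := hs'sq0
    have hp2s : p2 = 2*s'^2/3 := by rw [hs'sq]; ring
    have hp3le : p3 ≤ 2*s'^3/9 := by
      have h6' : 6*p3^2 ≤ (2*s'^2/3)^3 := by rw [← hp2s]; exact h6
      have h2 : p3^2 ≤ (2*s'^3/9)^2 := by nlinarith [h6']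
      calc p3 ≤ |p3| := le_abs_self _
        _ = Real.sqrt (p3^2) := (Real.sqrt_sq_eq_abs _).symm
        _ ≤ Real.sqrt ((2*s'^3/9)^2) := Real.sqrt_le_sqrt h2
        _ = 2*s'^3/9 := Real.sqrt_sq (by positivity)
    have hfg : gfun a b c s' ≤ fLG a b c Q := by
      unfold fLG gfun
      rw [← hp2, ← hp3, hp2s]
      nlinarith [hp3le, hb.le]
    have he2 : (0:ℝ) ≤ 2*c*m - 2*b/3 := by linarith
    have he3 : (0:ℝ) < c*m^2 - b*m/3 := by
      have := mul_pos (sub_pos.mpr hbm) hmpos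
      nlinarith [this]
    have hB : 0 ≤ c*s'^2 + (2*c*m-2*b/3)*s' + (c*m^2 - b*m/3) := by
      have e1 : (0:ℝ) ≤ c*s'^2 := mul_nonneg hc.le (sq_nonneg _)
      have e2 : (0:ℝ) ≤ (2*c*m-2*b/3)*s' := mul_nonneg he2 hs'nn
      linarith
    have hgg : gfun a b c m ≤ gfun a b c s' := by
      have hid := g_ineq a b c s' m hroot
      have hprod : 0 ≤ (s'-m)^2 * (c*s'^2 + (2*c*m-2*b/3)*s' + (c*m^2 - b*m/3)) :=
        mul_nonneg (sq_nonneg _) hB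
      linarith [hid, hprod]
    linarith
  -- the value on a uniaxial matrix
  have hval : ∀ n : Fin 3 → ℝ, (∑ i, n i ^ 2) = 1 →
      fLG a b c (m • (vecMulVec n n - (1/3 : ℝ) • (1 : M3))) = gfun a b c m := by
    intro n hn
    obtain ⟨_, _, ht2, ht3⟩ := uniax_traces m n hn
    unfold fLG gfun
    rw [ht2, ht3]
    ring
  -- membership of uniaxial matrices in the minimizer set
  have hforward : ∀ Q : M3, (∃ n : Fin 3 → ℝ, (∑ i, n i ^ 2) = 1 ∧
      Q = m • (vecMulVec n n - (1/3 : ℝ) • (1 : M3))) →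
      (Qᵀ = Q ∧ Q.trace = 0) ∧ ∀ P ∈ S0, fLG a b c Q ≤ fLG a b c P := by
    rintro Q ⟨n, hn, rfl⟩
    obtain ⟨hts, htr, _, _⟩ := uniax_traces m n hn
    refine ⟨⟨hts, htr⟩, fun P hP => ?_⟩
    rw [hval n hn]
    exact hmin P hP.1 hP.2
  -- minimizers are uniaxial
  have hbackward : ∀ Q : M3, Qᵀ = Q → Q.trace = 0 →
      (∀ P ∈ S0, fLG a b c Q ≤ fLG a b c P) →
      ∃ n : Fin 3 → ℝ, (∑ i, n i ^ 2) = 1 ∧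
        Q = m • (vecMulVec n n - (1/3 : ℝ) • (1 : M3)) := by
    intro Q hQsym hQtr hQmin
    -- fLG Q = gfun m
    have hn0 : (∑ i : Fin 3, (![1,0,0] : Fin 3 → ℝ) i ^ 2) = 1 := by
      simp [Fin.sum_univ_three]
    have hQ0 := uniax_traces m ![1,0,0] hn0
    have hle : fLG a b c Q ≤ gfun a b c m := by
      have := hQmin (m • (vecMulVec ![1,0,0] ![1,0,0] - (1/3 : ℝ) • (1 : M3)))
        ⟨hQ0.1, hQ0.2.1⟩
      rwa [hval _ hn0] at this
    have hge := hmin Q hQsym hQtr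
    have hfeq : fLG a b c Q = gfun a b c m := le_antisymm hle hge
    -- redo the chain to extract equalities
    have hH := herm_of_symm hQsym
    obtain ⟨ht1, ht2, ht3⟩ := trace_powers hH
    set lam := hH.eigenvalues with hlam
    clear_value lam
    have hsum0 : lam 0 + lam 1 + lam 2 = 0 := by
      have := ht1.symm.trans hQtr
      simpa [Fin.sum_univ_three] using this
    set p2 := (Q*Q).trace with hp2
    set p3 := (Q*Q*Q).trace with hp3
    clear_value p2 p3
    have hp2e : p2 = lam 0 ^2 + lam 1 ^2 + lam 2 ^2 := by
      rw [ht2, Fin.sum_univ_three]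
    have hp3e : p3 = lam 0 ^3 + lam 1 ^3 + lam 2 ^3 := by
      rw [ht3, Fin.sum_univ_three]
    have hp2nn : 0 ≤ p2 := by rw [hp2e]; positivity
    have h6 : 6*p3^2 ≤ p2^3 := by
      rw [hp2e, hp3e]; exact cubic_ineq _ _ _ hsum0
    set s' := Real.sqrt (3*p2/2) with hs'
    have hs'nn : 0 ≤ s' := Real.sqrt_nonneg _
    have hs'sq0 : s'^2 = 3*p2/2 := Real.sq_sqrt (by linarith)
    clear_value s'
    have hs'sq : s'^2 = 3*p2/2 := hs'sq0
    have hp2s : p2 = 2*s'^2/3 := by rw [hs'sq]; ring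
    have hp3le : p3 ≤ 2*s'^3/9 := by
      have h6' : 6*p3^2 ≤ (2*s'^2/3)^3 := by rw [← hp2s]; exact h6
      have h2 : p3^2 ≤ (2*s'^3/9)^2 := by nlinarith [h6']
      calc p3 ≤ |p3| := le_abs_self _
        _ = Real.sqrt (p3^2) := (Real.sqrt_sq_eq_abs _).symm
        _ ≤ Real.sqrt ((2*s'^3/9)^2) := Real.sqrt_le_sqrt h2
        _ = 2*s'^3/9 := Real.sqrt_sq (by positivity)
    have hfg : gfun a b c s' ≤ fLG a b c Q := by
      unfold fLG gfun
      rw [← hp2, ← hp3, hp2s]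
      nlinarith [hp3le, hb.le]
    have he2 : (0:ℝ) ≤ 2*c*m - 2*b/3 := by linarith
    have he3 : (0:ℝ) < c*m^2 - b*m/3 := by
      have := mul_pos (sub_pos.mpr hbm) hmpos
      nlinarith [this]
    have hB : 0 ≤ c*s'^2 + (2*c*m-2*b/3)*s' + (c*m^2 - b*m/3) := by
      have e1 : (0:ℝ) ≤ c*s'^2 := mul_nonneg hc.le (sq_nonneg _)
      have e2 : (0:ℝ) ≤ (2*c*m-2*b/3)*s' := mul_nonneg he2 hs'nn
      linarith
    have hgg : gfun a b c m ≤ gfun a b c s' := by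
      have hid := g_ineq a b c s' m hroot
      have hprod : 0 ≤ (s'-m)^2 * (c*s'^2 + (2*c*m-2*b/3)*s' + (c*m^2 - b*m/3)) :=
        mul_nonneg (sq_nonneg _) hB
      linarith [hid, hprod]
    have hgeq : gfun a b c s' = gfun a b c m := by linarith [hfeq ▸ hfg]
    -- equality forces s' = m
    have hseq : s' = m := by
      have hid := g_ineq a b c s' m hroot
      have hBpos : 0 < c*s'^2 + (2*c*m-2*b/3)*s' + (c*m^2 - b*m/3) := by
        have e1 : (0:ℝ) ≤ c*s'^2 := mul_nonneg hc.le (sq_nonneg _)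
        have e2 : (0:ℝ) ≤ (2*c*m-2*b/3)*s' := mul_nonneg he2 hs'nn
        linarith
      have : (s'-m)^2 * (c*s'^2 + (2*c*m-2*b/3)*s' + (c*m^2 - b*m/3)) = 0 := by
        rw [← hid, hgeq]; ring
      have h0 : (s'-m)^2 = 0 := by
        rcases mul_eq_zero.mp this with h | h
        · exact h
        · exact absurd h (ne_of_gt hBpos)
      have := pow_eq_zero_iff (n := 2) (by norm_num) |>.mp h0
      linarith
    have hp2m : p2 = 2*m^2/3 := by rw [hp2s, hseq]
    -- extract p3 = 2 m^3/9
    have hp3m : p3 = 2*m^3/9 := by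
      have heq : -(a/2) * p2 - (b/3) * p3 + (c/4) * p2^2 = gfun a b c m := by
        unfold fLG at hfeq
        rw [← hp2, ← hp3] at hfeq
        exact hfeq
      rw [hp2m] at heq
      unfold gfun at heq
      have hbp : b * p3 = b * (2*m^3/9) := by linear_combination (-3) * heq
      exact mul_left_cancel₀ (ne_of_gt hb) hbp
    -- determinant
    have hdet3 : p3 = 3 * Q.det := by
      have := congrArg Matrix.trace (ch3 Q)
      rw [Matrix.trace_add, Matrix.trace_add, Matrix.trace_smul, Matrix.trace_smul,
        Matrix.trace_smul, hQtr, Matrix.trace_one, ← hp2, ← hp3] at this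
      simp at this
      linarith
    -- Cayley-Hamilton with known invariants
    have hCH : Q * Q * Q = (m^2/3) • Q + (2*m^3/27) • (1:M3) := by
      have h := ch3 Q
      rw [hQtr, ← hp2, hp2m] at h
      have hdet : Q.det = 2*m^3/27 := by
        rw [hp3m] at hdet3; linarith
      rw [hdet] at h
      rw [h]
      module
    -- A := Q + (m/3) • 1, C := Q - (2m/3) • 1
    set A : M3 := Q + (m/3) • 1 with hA
    set C : M3 := Q - (2*m/3) • 1 with hC
    have hAAC : A * A * C = 0 := by
      have expand : A * A * C = Q*Q*Q - (m^2/3) • Q - (2*m^3/27) • (1:M3) := by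
        simp only [hA, hC, add_mul, mul_add, sub_mul, mul_sub, Matrix.smul_mul, Matrix.mul_smul,
          Matrix.one_mul, Matrix.mul_one, smul_smul]
        module
      rw [expand, hCH]
      module
    have hAsym : Aᵀ = A := by
      rw [hA, Matrix.transpose_add, hQsym, Matrix.transpose_smul, Matrix.transpose_one]
    have hCsym : Cᵀ = C := by
      rw [hC, Matrix.transpose_sub, hQsym, Matrix.transpose_smul, Matrix.transpose_one]
    have hAC : A * C = 0 := by
      apply eq_zero_of_trace_sq
      have htp : (A*C)ᵀ = C * A := by rw [Matrix.transpose_mul, hAsym, hCsym]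
      rw [htp]
      have : C * A * (A * C) = C * (A * A * C) := by
        rw [Matrix.mul_assoc C A (A * C), ← Matrix.mul_assoc A A C]
      rw [this, hAAC, Matrix.mul_zero, Matrix.trace_zero]
    have hCA : C = A - m • 1 := by
      rw [hC, hA]
      ext j k
      simp [Matrix.sub_apply, Matrix.add_apply, Matrix.smul_apply, Matrix.one_apply]
      split_ifs <;> ring
    have hA2 : A * A = m • A := by
      have : A * (A - m • 1) = 0 := by rw [← hCA]; exact hAC
      rw [mul_sub, Matrix.mul_smul, Matrix.mul_one, sub_eq_zero] at this
      exact this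
    -- P := m⁻¹ • A is a symmetric rank-one projection
    set P : M3 := m⁻¹ • A with hP
    have hmne : m ≠ 0 := ne_of_gt hmpos
    have hPP : P * P = P := by
      rw [hP, Matrix.smul_mul, Matrix.mul_smul, hA2, smul_smul, smul_smul]
      congr 1
      field_simp
    have hPsym : Pᵀ = P := by rw [hP, Matrix.transpose_smul, hAsym]
    have hPtr : P.trace = 1 := by
      rw [hP, Matrix.trace_smul, hA, Matrix.trace_add, Matrix.trace_smul, hQtr,
        Matrix.trace_one]
      simp
      field_simp
    obtain ⟨n, hn1, hn2⟩ := proj_rank_one P hPsym hPP hPtr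
    refine ⟨n, hn1, ?_⟩
    rw [← hn2, hP, smul_sub, smul_smul]
    rw [mul_inv_cancel₀ hmne, one_smul]
    rw [hA]
    ext j k
    simp [Matrix.sub_apply, Matrix.add_apply, Matrix.smul_apply, Matrix.one_apply]
    ring
  constructor
  · ext Q
    simp only [Set.mem_setOf_eq, S0, Set.mem_sep_iff]
    constructor
    · rintro ⟨⟨hsym, htr⟩, hminQ⟩
      exact hbackward Q hsym htr hminQ
    · intro hex
      obtain ⟨⟨h1, h2⟩, h3⟩ := hforward Q hex
      exact ⟨⟨h1, h2⟩, h3⟩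
  · rintro Q ⟨⟨hsym, htr⟩, hminQ⟩
    obtain ⟨n, hn, hQform⟩ := hbackward Q hsym htr hminQ
    obtain ⟨_, _, ht2, ht3⟩ := uniax_traces m n hn
    rw [← hQform] at ht2 ht3
    constructor
    · unfold frob
      rw [sumsq_eq_trace, hsym, ht2]
      rw [show 2*m^2/3 = m^2 * (2/3) by ring, Real.sqrt_mul (sq_nonneg m),
        Real.sqrt_sq hmpos.le]
    · rw [ht2, ht3]
      ring
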